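/- Let f(x) = (x+1)(x+2) + 2x(x+1)(x+2) + x(x-1)(x+1)(x+2) + 4. Then for all integers i ≥ j ≥ 0, f(i) ≥ 0 and |s(i+2,j;1)| ≤ f(i) * |s(i,j;1)|. -/

import Mathlib

/-- The non-centered Stirling numbers of the first kind `s(m,j;1)`, defined
by `(x-1)(x-2)⋯(x-m) = Σ_{j=0}^{m} s(m,j;1) x^j`. -/
noncomputable def stirling1 (m j : ℕ) : ℤ :=
  (∏ k ∈ Finset.range m, (Polynomial.X - Polynomial.C ((k : ℤ) + 1))).coeff j

/-- `f(x) = (x+1)(x+2) + 2x(x+1)(x+2) + x(x-1)(x+1)(x+2) + 4`. -/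
def fBound (x : ℤ) : ℤ :=
  (x + 1) * (x + 2) + 2 * x * (x + 1) * (x + 2) + x * (x - 1) * (x + 1) * (x + 2) + 4

lemma stirling1_rec_succ (m j : ℕ) :
    stirling1 (m + 1) (j + 1) = stirling1 m j - ((m : ℤ) + 1) * stirling1 m (j + 1) := by
  unfold stirling1
  rw [Finset.prod_range_succ, mul_sub, Polynomial.coeff_sub,
    Polynomial.coeff_mul_X, Polynomial.coeff_mul_C]
  ring

lemma stirling1_rec_zero (m : ℕ) :
    stirling1 (m + 1) 0 = -(((m : ℤ) + 1) * stirling1 m 0) := by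
  unfold stirling1
  rw [Finset.prod_range_succ, mul_sub, Polynomial.coeff_sub, Polynomial.coeff_mul_C,
    Polynomial.mul_coeff_zero, Polynomial.coeff_X_zero]
  ring

lemma stirling1_zero (j : ℕ) : stirling1 0 j = if j = 0 then 1 else 0 := by
  unfold stirling1
  simp [Polynomial.coeff_one]

lemma prod_monic (m : ℕ) :
    (∏ k ∈ Finset.range m, (Polynomial.X - Polynomial.C ((k : ℤ) + 1))).Monic :=
  Polynomial.monic_prod_of_monic _ _ fun k _ => Polynomial.monic_X_sub_C _

lemma prod_natDegree (m : ℕ) :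
    (∏ k ∈ Finset.range m, (Polynomial.X - Polynomial.C ((k : ℤ) + 1))).natDegree = m := by
  rw [Polynomial.natDegree_prod]
  · simp only [Polynomial.natDegree_X_sub_C, Finset.sum_const, Finset.card_range, smul_eq_mul, mul_one]
  · intro k _; exact Polynomial.X_sub_C_ne_zero _

lemma stirling1_diag (m : ℕ) : stirling1 m m = 1 := by
  have h := (prod_monic m).leadingCoeff
  rwa [Polynomial.leadingCoeff, prod_natDegree] at h

lemma stirling1_eq_zero_of_lt {m j : ℕ} (h : m < j) : stirling1 m j = 0 := by
  apply Polynomial.coeff_eq_zero_of_natDegree_lt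
  rwa [prod_natDegree]

/-- unsigned Stirling numbers -/
noncomputable def cS (m j : ℕ) : ℤ := (-1) ^ (m + j) * stirling1 m j

lemma cS_rec_succ (m j : ℕ) :
    cS (m + 1) (j + 1) = cS m j + ((m : ℤ) + 1) * cS m (j + 1) := by
  unfold cS
  rw [stirling1_rec_succ]
  have h1 : ((-1 : ℤ)) ^ (m + 1 + (j + 1)) = (-1) ^ (m + j) := by
    rw [show m + 1 + (j + 1) = m + j + 2 by ring, pow_add]; ring
  have h2 : ((-1 : ℤ)) ^ (m + (j + 1)) = -(-1) ^ (m + j) := by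
    rw [show m + (j + 1) = m + j + 1 by ring, pow_succ]; ring
  rw [h1, h2]; ring

lemma cS_rec_zero (m : ℕ) : cS (m + 1) 0 = ((m : ℤ) + 1) * cS m 0 := by
  unfold cS
  rw [stirling1_rec_zero, pow_succ]
  ring

lemma cS_nonneg (m j : ℕ) : 0 ≤ cS m j := by
  induction m generalizing j with
  | zero =>
    unfold cS
    rw [stirling1_zero]
    split <;> simp_all
  | succ n ih =>
    rcases j with _ | j
    · rw [cS_rec_zero]
      have h1 := ih 0
      have hn0 : (0:ℤ) ≤ (n:ℤ) := Int.ofNat_nonneg n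
      nlinarith [mul_nonneg hn0 h1]
    · rw [cS_rec_succ]
      have h1 := ih j
      have h2 := ih (j + 1)
      have hn0 : (0:ℤ) ≤ (n:ℤ) := Int.ofNat_nonneg n
      push_cast
      nlinarith [mul_nonneg hn0 h2]

lemma abs_stirling1 (m j : ℕ) : |stirling1 m j| = cS m j := by
  have h : |stirling1 m j| = |cS m j| := by
    unfold cS
    rw [abs_mul, abs_pow, abs_neg, abs_one, one_pow, one_mul]
  rw [h, abs_of_nonneg (cS_nonneg m j)]

lemma cS_diag (m : ℕ) : cS m m = 1 := by
  unfold cS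
  rw [stirling1_diag, Even.neg_one_pow ⟨m, by ring⟩, mul_one]

/-- key inequality -/
lemma cS_key (m : ℕ) : ∀ j, j < m → 2 * cS m j ≤ (m : ℤ) * (m + 1) * cS m (j + 1) := by
  induction m with
  | zero => intro j h; omega
  | succ n ih =>
    intro j hj
    have hn : ((n : ℤ)) * (n + 1) ≤ (n + 1) * (n + 2) := by nlinarith [Int.ofNat_nonneg n]
    push_cast
    rcases Nat.lt_or_ge j n with hlt | hge
    · -- j < n
      rcases j with _ | j
      · rw [cS_rec_zero, cS_rec_succ]
        have h1 := ih 0 hlt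
        have h2 := cS_nonneg n 0
        have h3 := cS_nonneg n 1
        push_cast at h1 ⊢
        have hn0 : (0:ℤ) ≤ (n:ℤ) := Int.ofNat_nonneg n
        nlinarith [mul_nonneg hn0 h2, mul_nonneg hn0 h3, mul_nonneg (mul_nonneg hn0 hn0) h2,
          mul_nonneg (mul_nonneg hn0 hn0) h3,
          mul_le_mul_of_nonneg_left h1 hn0]
      · rw [cS_rec_succ, cS_rec_succ]
        have h1 := ih j (by omega)
        have h2 := ih (j + 1) hlt
        have h3 := cS_nonneg n j
        have h4 := cS_nonneg n (j + 1)
        have h5 := cS_nonneg n (j + 2)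
        have hn0 : (0:ℤ) ≤ (n:ℤ) := Int.ofNat_nonneg n
        push_cast at h1 h2 ⊢
        nlinarith [mul_nonneg hn0 h3, mul_nonneg hn0 h4, mul_nonneg hn0 h5,
          mul_nonneg (mul_nonneg hn0 hn0) h4, mul_nonneg (mul_nonneg hn0 hn0) h5,
          mul_le_mul_of_nonneg_left h1 hn0, mul_le_mul_of_nonneg_left h2 hn0,
          mul_le_mul_of_nonneg_left h2 (mul_nonneg hn0 hn0)]
    · -- j = n
      have hjn : j = n := by omega
      subst hjn
      rw [cS_diag]
      rcases j with _ | j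
      · rw [cS_rec_zero, cS_diag]
        norm_num
      · rw [cS_rec_succ, cS_diag]
        have h1 := ih j (by omega)
        rw [cS_diag] at h1
        push_cast at h1 ⊢
        nlinarith [Int.ofNat_nonneg (j + 1)]

theorem abs_stirling1_step_bound (i j : ℕ) (hij : j ≤ i) :
    0 ≤ fBound (i : ℤ) ∧
      |stirling1 (i + 2) j| ≤ fBound (i : ℤ) * |stirling1 i j| := by
  have hn0 : (0:ℤ) ≤ (i:ℤ) := Int.ofNat_nonneg i
  constructor
  · unfold fBound
    nlinarith [mul_nonneg hn0 hn0, mul_nonneg (mul_nonneg hn0 hn0) hn0,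
      mul_nonneg (mul_nonneg (mul_nonneg hn0 hn0) hn0) hn0]
  rw [abs_stirling1, abs_stirling1]
  unfold fBound
  rcases j with _ | j
  · -- j = 0
    rw [show i + 2 = (i + 1) + 1 from rfl, cS_rec_zero, cS_rec_zero]
    have hc := cS_nonneg i 0
    push_cast
    nlinarith [mul_nonneg hn0 hc, mul_nonneg (mul_nonneg hn0 hn0) hc,
      mul_nonneg (mul_nonneg (mul_nonneg hn0 hn0) hn0) hc,
      mul_nonneg (mul_nonneg (mul_nonneg (mul_nonneg hn0 hn0) hn0) hn0) hc]
  rcases j with _ | j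
  · -- j = 1
    have hi1 : 0 < i := hij
    rw [show i + 2 = (i + 1) + 1 from rfl, cS_rec_succ, cS_rec_zero, cS_rec_succ]
    have hc0 := cS_nonneg i 0
    have hc1 := cS_nonneg i 1
    have hk := cS_key i 0 hi1
    push_cast
    nlinarith [mul_nonneg hn0 hc0, mul_nonneg hn0 hc1, mul_nonneg (mul_nonneg hn0 hn0) hc1,
      mul_nonneg (mul_nonneg (mul_nonneg hn0 hn0) hn0) hc1,
      mul_nonneg (mul_nonneg (mul_nonneg (mul_nonneg hn0 hn0) hn0) hn0) hc1,
      mul_le_mul_of_nonneg_left hk (by linarith : (0:ℤ) ≤ 2*(i:ℤ)+3)]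
  · -- j = k + 2
    have hk1 : j < i := by omega
    have hk2 : j + 1 < i := by omega
    rw [show i + 2 = (i + 1) + 1 from rfl, cS_rec_succ, cS_rec_succ, cS_rec_succ]
    have hc0 := cS_nonneg i j
    have hc1 := cS_nonneg i (j + 1)
    have hc2 := cS_nonneg i (j + 2)
    have h1 := cS_key i j hk1
    have h2 := cS_key i (j + 1) hk2
    have hM : (0:ℤ) ≤ (i:ℤ) * ((i:ℤ) + 1) := by positivity
    have h3 : 4 * cS i j ≤ ((i:ℤ) * ((i:ℤ)+1)) * ((i:ℤ) * ((i:ℤ)+1)) * cS i (j + 2) := by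
      nlinarith [mul_le_mul_of_nonneg_left h2 hM]
    push_cast
    nlinarith [mul_nonneg hn0 hc2, mul_nonneg (mul_nonneg hn0 hn0) hc2,
      mul_nonneg (mul_nonneg (mul_nonneg hn0 hn0) hn0) hc2,
      mul_nonneg (mul_nonneg (mul_nonneg (mul_nonneg hn0 hn0) hn0) hn0) hc2,
      mul_le_mul_of_nonneg_left h2 (by linarith : (0:ℤ) ≤ 2*(i:ℤ)+3), h3]
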